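/- Let T be a rooted symmetric tree with daughter degree sequence (k_1,...,k_{q-1}), all k_i ≥ 1, with level vertex sizes h_i (h_q = 1, h_i = 1 + k_i h_{i+1}). Define f on vertices by: f(root) = 0; for a vertex at even level r identified by sequence (x_1,...,x_{r-1}), f = (k_1 - x_1)h_2 - x_2 h_3 - ... - x_{r-1} h_r - (r-2)/2; for odd level r ≥ 3, f = x_1 h_2 + x_2 h_3 + ... + x_{r-1} h_r + (r-1)/2. Then f is an injective map from the vertex set into {0, 1, ..., h_1 - 1}. -/
import Mathlib


/-- The `i`-th level vertex size of a rooted symmetric tree with `q` levels and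
daughter degree sequence `k 1, …, k (q-1)`:
`h i = 1 + ∑_{j=i}^{q-1} k i * k (i+1) * ⋯ * k j`, so `h q = 1`. -/
def hlvl (q : ℕ) (k : ℕ → ℕ) (i : ℕ) : ℕ :=
  1 + ∑ j ∈ Finset.Icc i (q - 1), ∏ t ∈ Finset.Icc i j, k t

/-- The vertex set of a rooted symmetric tree with `q` levels: a vertex at level
`r.val + 1` is identified with its sequence of child indices `(x_1, …, x_{r.val})`
where `0 ≤ x_i < k i`. -/
def Vertex (q : ℕ) (k : ℕ → ℕ) : Type :=
  Σ r : Fin q, (i : Fin r.val) → Fin (k (i.val + 1))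

instance (q : ℕ) (k : ℕ → ℕ) : Fintype (Vertex q k) := by
  unfold Vertex; infer_instance

instance (q : ℕ) (k : ℕ → ℕ) : DecidableEq (Vertex q k) := by
  unfold Vertex; infer_instance

/-- The (1-based) child-index sequence of a vertex, extended by `0`. -/
def seqOf {q : ℕ} {k : ℕ → ℕ} (v : Vertex q k) (i : ℕ) : ℕ :=
  if h : i - 1 < v.1.val then (v.2 ⟨i - 1, h⟩).val else 0

/-- Level of a vertex (root has level 1). -/
def level {q : ℕ} {k : ℕ → ℕ} (v : Vertex q k) : ℕ := v.1.val + 1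

/-- Odd-level value of the labelling of Theorem 1. -/
def fOdd (q : ℕ) (k : ℕ → ℕ) (x : ℕ → ℕ) (r : ℕ) : ℕ :=
  ∑ i ∈ Finset.Icc 1 (r - 1), x i * hlvl q k (i + 1) + (r - 1) / 2

/-- Even-level value of the labelling of Theorem 1. -/
def fEven (q : ℕ) (k : ℕ → ℕ) (x : ℕ → ℕ) (r : ℕ) : ℕ :=
  (k 1 - x 1) * hlvl q k 2
    - ∑ i ∈ Finset.Icc 2 (r - 1), x i * hlvl q k (i + 1) - (r - 2) / 2

/-- The vertex labelling `f` of Theorem 1. -/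
def flabel (q : ℕ) (k : ℕ → ℕ) (v : Vertex q k) : ℕ :=
  if Even (level v) then fEven q k (seqOf v) (level v) else fOdd q k (seqOf v) (level v)

/-- The parent of a vertex (the root is mapped to itself). -/
def parent {q : ℕ} {k : ℕ → ℕ} (v : Vertex q k) : Vertex q k :=
  ⟨⟨v.1.val - 1, by have := v.1.isLt; omega⟩,
    fun i => v.2 (Fin.castLE (Nat.sub_le _ _) i)⟩

/-- The induced edge label on the edge joining `v` (non-root) to its parent. -/
def glabel (q : ℕ) (k : ℕ → ℕ) (v : Vertex q k) : ℕ :=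
  ((flabel q k v : ℤ) - (flabel q k (parent v) : ℤ)).natAbs

lemma Icc_insert_left {a b : ℕ} (h : a ≤ b) :
    Finset.Icc a b = insert a (Finset.Icc (a+1) b) := by
  ext x; simp [Finset.mem_Icc]; omega

lemma Icc_succ_map (a b : ℕ) :
    Finset.Icc (a + 1) (b + 1) = (Finset.Icc a b).map ⟨fun x => x + 1, add_left_injective 1⟩ := by
  ext x
  simp only [Finset.mem_map, Finset.mem_Icc, Function.Embedding.coeFn_mk]
  constructor
  · intro h; exact ⟨x - 1, by omega, by omega⟩
  · rintro ⟨y, hy, rfl⟩; omega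

lemma hlvl_pos (q : ℕ) (k : ℕ → ℕ) (i : ℕ) : 1 ≤ hlvl q k i := Nat.le_add_right 1 _

lemma hlvl_rec (q : ℕ) (k : ℕ → ℕ) (i : ℕ) (h : i + 1 ≤ q) :
    hlvl q k i = 1 + k i * hlvl q k (i + 1) := by
  unfold hlvl
  have hi : i ≤ q - 1 := by omega
  rw [Icc_insert_left hi, Finset.sum_insert (by simp)]
  rw [Finset.Icc_self, Finset.prod_singleton]
  have : ∀ j ∈ Finset.Icc (i+1) (q-1), (∏ t ∈ Finset.Icc i j, k t)
      = k i * ∏ t ∈ Finset.Icc (i+1) j, k t := by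
    intro j hj
    simp only [Finset.mem_Icc] at hj
    rw [Icc_insert_left (by omega), Finset.prod_insert (by simp)]
  rw [Finset.sum_congr rfl this, ← Finset.mul_sum]
  ring

lemma hlvl_shift (q : ℕ) (k : ℕ → ℕ) (i : ℕ) (hi : 1 ≤ i) :
    hlvl q (fun j => k (j + 1)) i = hlvl (q + 1) k (i + 1) := by
  unfold hlvl
  congr 1
  rcases Nat.eq_zero_or_pos q with rfl | hq
  · rw [Finset.Icc_eq_empty (by omega), Finset.Icc_eq_empty (by omega)]; simp
  · have hq1 : q + 1 - 1 = (q - 1) + 1 := by omega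
    rw [hq1, Icc_succ_map, Finset.sum_map]
    apply Finset.sum_congr rfl
    intro j hj
    simp only [Function.Embedding.coeFn_mk]
    rw [Icc_succ_map, Finset.prod_map]
    rfl
lemma telescope (q : ℕ) (k : ℕ → ℕ) (hk : ∀ i, 1 ≤ k i) (a : ℕ) (ha : 1 ≤ a) :
    ∀ r, a ≤ r → r ≤ q →
      ∑ i ∈ Finset.Icc a (r - 1), (k i - 1) * hlvl q k (i + 1) + (hlvl q k r + (r - a))
        = hlvl q k a := by
  refine Nat.le_induction ?_ ?_
  · intro _
    rw [Finset.Icc_eq_empty (by omega)]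
    simp
  · intro n hn IH hq
    have IH' := IH (by omega)
    have hrec : hlvl q k n = 1 + k n * hlvl q k (n + 1) := hlvl_rec q k n hq
    have htop : n + 1 - 1 = (n - 1) + 1 := by omega
    rw [htop, Finset.sum_Icc_succ_top (by omega)]
    have hsub : (k n - 1) * hlvl q k (n + 1) = k n * hlvl q k (n + 1) - hlvl q k (n + 1) := by
      rw [Nat.sub_one_mul]
    have hge : hlvl q k (n + 1) ≤ k n * hlvl q k (n + 1) :=
      Nat.le_mul_of_pos_left _ (hk n)
    have h1 : n - 1 + 1 = n := by omega
    rw [h1]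
    generalize hA : ∑ i ∈ Finset.Icc a (n - 1), (k i - 1) * hlvl q k (i + 1) = A at IH' ⊢
    generalize hB : k n * hlvl q k (n + 1) = B at *
    omega
/-- The tail of a non-root vertex: drop the first child index. -/
def tailv {q : ℕ} {k : ℕ → ℕ} (v : Vertex (q + 1) k) (hv : v.1.val ≠ 0) :
    Vertex q (fun i => k (i + 1)) :=
  ⟨⟨v.1.val - 1, by have := v.1.isLt; omega⟩,
   fun i => v.2 ⟨i.val + 1, by have : i.val < v.1.val - 1 := i.isLt; omega⟩⟩

lemma tailv_fst {q : ℕ} {k : ℕ → ℕ} (v : Vertex (q + 1) k) (hv : v.1.val ≠ 0) :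
    (tailv v hv).1.val = v.1.val - 1 := rfl

lemma seqOf_eq {q : ℕ} {k : ℕ → ℕ} (v : Vertex q k) (i : ℕ) (h : i - 1 < v.1.val) :
    seqOf v i = (v.2 ⟨i - 1, h⟩).val := dif_pos h

lemma snd_congr {q : ℕ} {k : ℕ → ℕ} (v : Vertex q k) {a b : ℕ} (ha : a < v.1.val)
    (hb : b < v.1.val) (h : a = b) : (v.2 ⟨a, ha⟩).val = (v.2 ⟨b, hb⟩).val := by
  subst h; rfl

lemma seqOf_lt {q : ℕ} {k : ℕ → ℕ} (v : Vertex q k) (i : ℕ) (h1 : 1 ≤ i)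
    (h2 : i ≤ v.1.val) : seqOf v i < k i := by
  rw [seqOf_eq v i (by omega)]
  have h3 : (v.2 ⟨i - 1, by omega⟩).val < k (i - 1 + 1) := (v.2 ⟨i - 1, by omega⟩).isLt
  convert h3 using 2
  omega

lemma seqOf_tailv {q : ℕ} {k : ℕ → ℕ} (v : Vertex (q + 1) k) (hv : v.1.val ≠ 0)
    (i : ℕ) (h1 : 1 ≤ i) (h2 : i ≤ v.1.val - 1) :
    seqOf (tailv v hv) i = seqOf v (i + 1) := by
  have hlt : i - 1 < (tailv v hv).1.val := by rw [tailv_fst]; omega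
  have hlt2 : (i + 1) - 1 < v.1.val := by omega
  rw [seqOf_eq _ _ hlt, seqOf_eq _ _ hlt2]
  exact snd_congr v _ _ (by show (i - 1) + 1 = i + 1 - 1; omega)

lemma flabel_root {q : ℕ} {k : ℕ → ℕ} (v : Vertex q k) (hv : v.1.val = 0) :
    flabel q k v = 0 := by
  unfold flabel level fOdd
  rw [hv]
  norm_num

lemma root_ext {q : ℕ} {k : ℕ → ℕ} (v w : Vertex q k) (hv : v.1.val = 0)
    (hw : w.1.val = 0) : v = w := by
  obtain ⟨⟨rv, hrv⟩, av⟩ := v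
  obtain ⟨⟨rw', hrw⟩, aw⟩ := w
  simp only at hv hw
  subst hv
  subst hw
  have : av = aw := funext fun i => absurd (show i.val < 0 from i.isLt) (by omega)
  cases this
  rfl

lemma vertex_ext {q : ℕ} {k : ℕ → ℕ} (v w : Vertex (q + 1) k) (hv : v.1.val ≠ 0)
    (hw : w.1.val ≠ 0) (h0 : seqOf v 1 = seqOf w 1)
    (ht : tailv v hv = tailv w hw) : v = w := by
  have h1 : v.1.val = w.1.val := by
    have := congrArg (fun z => z.1.val) ht
    simp only [tailv_fst] at this
    omega
  rw [seqOf_eq v 1 (by omega), seqOf_eq w 1 (by omega)] at h0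
  obtain ⟨⟨rv, hrv⟩, av⟩ := v
  obtain ⟨⟨rw', hrw⟩, aw⟩ := w
  simp only at h1 hv hw h0
  subst h1
  obtain ⟨s, rfl⟩ : ∃ s, rv = s + 1 := ⟨rv - 1, by omega⟩
  suffices hs : av = aw by cases hs; rfl
  injection ht with ht1 ht2
  funext i
  obtain ⟨ival, hival⟩ := i
  match ival, hival with
  | 0, hival => exact Fin.ext h0
  | (j+1), hival =>
      have hj : j < s := by have : j + 1 < s + 1 := hival; omega
      exact congrFun ht2 ⟨j, hj⟩
lemma sum_tail {q : ℕ} {k : ℕ → ℕ} (v : Vertex (q + 1) k) (hv : v.1.val ≠ 0)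
    (a b : ℕ) (ha : 1 ≤ a) (hb : b ≤ v.1.val - 1) :
    ∑ i ∈ Finset.Icc a b, seqOf (tailv v hv) i * hlvl q (fun j => k (j + 1)) (i + 1)
      = ∑ i ∈ Finset.Icc (a + 1) (b + 1), seqOf v i * hlvl (q + 1) k (i + 1) := by
  rw [Icc_succ_map, Finset.sum_map]
  apply Finset.sum_congr rfl
  intro i hi
  simp only [Finset.mem_Icc] at hi
  simp only [Function.Embedding.coeFn_mk]
  rw [seqOf_tailv v hv i (by omega) (by omega), hlvl_shift q k (i + 1) (by omega)]
lemma flabel_tail (q : ℕ) (k : ℕ → ℕ) (hk : ∀ i, 1 ≤ k i) (v : Vertex (q + 1) k)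
    (hv : v.1.val ≠ 0)
    (hbd : flabel q (fun i => k (i + 1)) (tailv v hv) ≤ hlvl q (fun i => k (i + 1)) 1 - 1) :
    (flabel (q + 1) k v : ℤ) =
      (if Even (level v) then (k 1 : ℤ) - seqOf v 1 else (seqOf v 1 : ℤ) + 1)
          * hlvl (q + 1) k 2
        - flabel q (fun i => k (i + 1)) (tailv v hv) := by
  obtain ⟨s, hs⟩ : ∃ s, v.1.val = s + 1 := ⟨v.1.val - 1, by omega⟩
  have hsq : s + 1 ≤ q := by have := v.1.isLt; omega
  have hlev : level v = s + 2 := by unfold level; omega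
  have hlevt : level (tailv v hv) = s + 1 := by unfold level; rw [tailv_fst]; omega
  have hH2 : hlvl q (fun i => k (i + 1)) 1 = hlvl (q + 1) k 2 := hlvl_shift q k 1 le_rfl
  have hH2pos := hlvl_pos (q + 1) k 2
  have hx1 : seqOf v 1 < k 1 := seqOf_lt v 1 le_rfl (by omega)
  rcases Nat.even_or_odd s with hse | hso
  · -- level v even
    have hse' : s % 2 = 0 := Nat.even_iff.mp hse
    have hev : Even (level v) := by rw [hlev]; exact Nat.even_iff.mpr (by omega)
    have hnevt : ¬ Even (level (tailv v hv)) := by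
      rw [hlevt]; simp only [Nat.even_iff]; omega
    have et : flabel q (fun i => k (i + 1)) (tailv v hv)
        = ∑ i ∈ Finset.Icc 2 (s + 1), seqOf v i * hlvl (q + 1) k (i + 1) + s / 2 := by
      unfold flabel
      rw [if_neg hnevt, hlevt]
      unfold fOdd
      have h1 : s + 1 - 1 = s := rfl
      rw [h1, sum_tail v hv 1 s le_rfl (by omega)]
    have evN : flabel (q + 1) k v
        = (k 1 - seqOf v 1) * hlvl (q + 1) k 2
            - (∑ i ∈ Finset.Icc 2 (s + 1), seqOf v i * hlvl (q + 1) k (i + 1) + s / 2) := by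
      unfold flabel
      rw [if_pos hev, hlev]
      unfold fEven
      have h1 : s + 2 - 1 = s + 1 := rfl
      have h2 : s + 2 - 2 = s := rfl
      rw [h1, h2, Nat.sub_sub]
    have eN : flabel (q + 1) k v
        = (k 1 - seqOf v 1) * hlvl (q + 1) k 2
            - flabel q (fun i => k (i + 1)) (tailv v hv) := by
      rw [evN, et]
    have hft : flabel q (fun i => k (i + 1)) (tailv v hv)
        ≤ (k 1 - seqOf v 1) * hlvl (q + 1) k 2 := by
      calc flabel q (fun i => k (i + 1)) (tailv v hv)
          ≤ hlvl q (fun i => k (i + 1)) 1 - 1 := hbd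
        _ ≤ hlvl (q + 1) k 2 := by rw [hH2]; omega
        _ ≤ (k 1 - seqOf v 1) * hlvl (q + 1) k 2 :=
            Nat.le_mul_of_pos_left _ (by omega)
    rw [if_pos hev, eN, Nat.cast_sub hft, Nat.cast_mul, Nat.cast_sub hx1.le]
  · -- level v odd
    have hso' : s % 2 = 1 := Nat.odd_iff.mp hso
    have hs1 : 1 ≤ s := by omega
    have hq2 : 2 ≤ q := by omega
    have hx2 : seqOf v 2 < k 2 := seqOf_lt v 2 (by omega) (by omega)
    have hnev : ¬ Even (level v) := by rw [hlev]; simp only [Nat.even_iff]; omega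
    have hevt : Even (level (tailv v hv)) := by
      rw [hlevt]; exact Nat.even_iff.mpr (by omega)
    have hh3 : hlvl q (fun i => k (i + 1)) 2 = hlvl (q + 1) k 3 := hlvl_shift q k 2 (by omega)
    have e1 : seqOf (tailv v hv) 1 = seqOf v 2 := seqOf_tailv v hv 1 le_rfl (by omega)
    have e3 : ∑ i ∈ Finset.Icc 2 s, seqOf (tailv v hv) i * hlvl q (fun j => k (j + 1)) (i + 1)
        = ∑ i ∈ Finset.Icc 3 (s + 1), seqOf v i * hlvl (q + 1) k (i + 1) :=
      sum_tail v hv 2 s (by omega) (by omega)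
    have htel : ∑ i ∈ Finset.Icc 2 s, (k (i + 1) - 1) * hlvl q (fun j => k (j + 1)) (i + 1)
          + (hlvl q (fun j => k (j + 1)) (s + 1) + (s + 1 - 2))
        = hlvl q (fun j => k (j + 1)) 2 :=
      telescope q (fun i => k (i + 1)) (fun i => hk _) 2 (by omega) (s + 1) (by omega) hsq
    have hxb : ∑ i ∈ Finset.Icc 2 s, seqOf (tailv v hv) i * hlvl q (fun j => k (j + 1)) (i + 1)
        ≤ ∑ i ∈ Finset.Icc 2 s, (k (i + 1) - 1) * hlvl q (fun j => k (j + 1)) (i + 1) := by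
      apply Finset.sum_le_sum
      intro i hi
      simp only [Finset.mem_Icc] at hi
      have hxi : seqOf (tailv v hv) i < k (i + 1) := by
        rw [seqOf_tailv v hv i (by omega) (by omega)]
        exact seqOf_lt v (i + 1) (by omega) (by omega)
      exact Nat.mul_le_mul_right _ (by omega)
    have hpos2 := hlvl_pos q (fun j => k (j + 1)) (s + 1)
    have hb2 : hlvl q (fun j => k (j + 1)) 2
        ≤ (k 2 - seqOf v 2) * hlvl q (fun j => k (j + 1)) 2 :=
      Nat.le_mul_of_pos_left _ (by omega)
    have htrunc : ∑ i ∈ Finset.Icc 3 (s + 1), seqOf v i * hlvl (q + 1) k (i + 1)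
          + (s + 1 - 2) / 2
        ≤ (k 2 - seqOf v 2) * hlvl (q + 1) k 3 := by
      rw [← e3, ← hh3]
      generalize hA : ∑ i ∈ Finset.Icc 2 s,
        seqOf (tailv v hv) i * hlvl q (fun j => k (j + 1)) (i + 1) = A at hxb ⊢
      generalize hB : ∑ i ∈ Finset.Icc 2 s,
        (k (i + 1) - 1) * hlvl q (fun j => k (j + 1)) (i + 1) = B at hxb htel
      generalize hC : hlvl q (fun j => k (j + 1)) 2 = C at htel hb2 ⊢
      generalize hD : hlvl q (fun j => k (j + 1)) (s + 1) = D at htel hpos2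
      generalize hE : (k 2 - seqOf v 2) * C = E at hb2 ⊢
      omega
    have et : flabel q (fun i => k (i + 1)) (tailv v hv)
        = (k 2 - seqOf v 2) * hlvl (q + 1) k 3
            - (∑ i ∈ Finset.Icc 3 (s + 1), seqOf v i * hlvl (q + 1) k (i + 1)
               + (s + 1 - 2) / 2) := by
      unfold flabel
      rw [if_pos hevt, hlevt]
      unfold fEven
      have h1 : s + 1 - 1 = s := rfl
      rw [h1, Nat.sub_sub, e1, e3, hh3]
    have ev : flabel (q + 1) k v
        = seqOf v 1 * hlvl (q + 1) k 2
            + (seqOf v 2 * hlvl (q + 1) k 3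
               + ∑ i ∈ Finset.Icc 3 (s + 1), seqOf v i * hlvl (q + 1) k (i + 1))
            + (s + 1) / 2 := by
      unfold flabel
      rw [if_neg hnev, hlev]
      unfold fOdd
      have h1 : s + 2 - 1 = s + 1 := rfl
      rw [h1]
      rw [Icc_insert_left (show 1 ≤ s + 1 by omega), Finset.sum_insert (by simp)]
      rw [Icc_insert_left (show 2 ≤ s + 1 by omega), Finset.sum_insert (by simp)]
    have hrec2 : hlvl (q + 1) k 2 = 1 + k 2 * hlvl (q + 1) k 3 :=
      hlvl_rec (q + 1) k 2 (by omega)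
    have hrec2' : (hlvl (q + 1) k 2 : ℤ) = 1 + (k 2 : ℤ) * (hlvl (q + 1) k 3 : ℤ) := by
      exact_mod_cast hrec2
    have hD12 : ((s + 1) / 2 : ℤ) = ((s + 1 - 2) / 2 : ℕ) + 1 := by
      have : (s + 1) / 2 = (s + 1 - 2) / 2 + 1 := by omega
      exact_mod_cast this
    rw [if_neg hnev, ev, et, Nat.cast_sub htrunc, Nat.cast_mul, Nat.cast_sub hx2.le]
    push_cast
    have hD' : ((s : ℤ) + 1) / 2 = ((s - 1 : ℕ) : ℤ) / 2 + 1 := by omega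
    linarith [hrec2', hD']
/-- Theorem 1 (vertex part): the labelling `f` of Theorem 1 is an injective map
from the vertex set of a rooted symmetric tree into `{0, 1, …, h 1 - 1}`. -/
theorem flabel_injective_and_bounded (q : ℕ) (k : ℕ → ℕ) (hq : 1 ≤ q)
    (hk : ∀ i, 1 ≤ k i) :
    Function.Injective (flabel q k) ∧ ∀ v : Vertex q k, flabel q k v ≤ hlvl q k 1 - 1 := by
  clear hq
  induction q generalizing k with
  | zero =>
      exact ⟨fun v w _ => absurd v.1.isLt (by omega),
        fun v => absurd v.1.isLt (by omega)⟩
  | succ q IH =>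
      obtain ⟨IHinj, IHbd⟩ := IH (fun i => k (i + 1)) (fun i => hk _)
      have hH2 : hlvl q (fun i => k (i + 1)) 1 = hlvl (q + 1) k 2 := hlvl_shift q k 1 le_rfl
      have hH2pos := hlvl_pos (q + 1) k 2
      have key : ∀ (v : Vertex (q + 1) k) (hv : v.1.val ≠ 0),
          (flabel (q + 1) k v : ℤ) =
            (if Even (level v) then (k 1 : ℤ) - seqOf v 1 else (seqOf v 1 : ℤ) + 1)
                * hlvl (q + 1) k 2
              - flabel q (fun i => k (i + 1)) (tailv v hv) :=
        fun v hv => flabel_tail q k hk v hv (IHbd _)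
      have hcb : ∀ (v : Vertex (q + 1) k), v.1.val ≠ 0 →
          1 ≤ (if Even (level v) then (k 1 : ℤ) - seqOf v 1 else (seqOf v 1 : ℤ) + 1) ∧
          (if Even (level v) then (k 1 : ℤ) - seqOf v 1 else (seqOf v 1 : ℤ) + 1)
            ≤ (k 1 : ℤ) := by
        intro v hv
        have hx1 : seqOf v 1 < k 1 := seqOf_lt v 1 le_rfl (by omega)
        split <;> constructor <;> omega
      have hfb : ∀ (v : Vertex (q + 1) k) (hv : v.1.val ≠ 0),
          (flabel q (fun i => k (i + 1)) (tailv v hv) : ℤ)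
            ≤ (hlvl (q + 1) k 2 : ℤ) - 1 := by
        intro v hv
        have h0 := IHbd (tailv v hv)
        have h1 := hlvl_pos q (fun i => k (i + 1)) 1
        omega
      have h4 : (0 : ℤ) ≤ (hlvl (q + 1) k 2 : ℤ) := by positivity
      have hnz : ∀ (v : Vertex (q + 1) k), v.1.val ≠ 0 → 1 ≤ (flabel (q + 1) k v : ℤ) := by
        intro v hv
        have h1 := key v hv
        obtain ⟨hcl, hcu⟩ := hcb v hv
        have h3 := hfb v hv
        nlinarith [mul_nonneg (by linarith :
          (0:ℤ) ≤ (if Even (level v) then (k 1 : ℤ) - seqOf v 1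
            else (seqOf v 1 : ℤ) + 1) - 1) h4]
      constructor
      · intro v w hvw
        by_cases hv : v.1.val = 0 <;> by_cases hw : w.1.val = 0
        · exact root_ext v w hv hw
        · exfalso
          have h1 := hnz w hw
          rw [flabel_root v hv] at hvw
          rw [← hvw] at h1
          norm_num at h1
        · exfalso
          have h1 := hnz v hv
          rw [flabel_root w hw] at hvw
          rw [hvw] at h1
          norm_num at h1
        · have e1 := key v hv
          have e2 := key w hw
          rw [hvw] at e1
          have e3 : (if Even (level v) then (k 1 : ℤ) - seqOf v 1 else (seqOf v 1 : ℤ) + 1)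
                  * hlvl (q + 1) k 2
                - flabel q (fun i => k (i + 1)) (tailv v hv)
              = (if Even (level w) then (k 1 : ℤ) - seqOf w 1 else (seqOf w 1 : ℤ) + 1)
                  * hlvl (q + 1) k 2
                - flabel q (fun i => k (i + 1)) (tailv w hw) := by
            rw [← e1, e2]
          obtain ⟨hcvl, hcvu⟩ := hcb v hv
          obtain ⟨hcwl, hcwu⟩ := hcb w hw
          have hfvb := hfb v hv
          have hfwb := hfb w hw
          have hfv0 : (0:ℤ) ≤ (flabel q (fun i => k (i + 1)) (tailv v hv) : ℤ) :=
            Int.natCast_nonneg _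
          have hfw0 : (0:ℤ) ≤ (flabel q (fun i => k (i + 1)) (tailv w hw) : ℤ) :=
            Int.natCast_nonneg _
          have hceq : (if Even (level v) then (k 1 : ℤ) - seqOf v 1 else (seqOf v 1 : ℤ) + 1)
              = (if Even (level w) then (k 1 : ℤ) - seqOf w 1 else (seqOf w 1 : ℤ) + 1) := by
            rcases lt_trichotomy
              (if Even (level v) then (k 1 : ℤ) - seqOf v 1 else (seqOf v 1 : ℤ) + 1)
              (if Even (level w) then (k 1 : ℤ) - seqOf w 1 else (seqOf w 1 : ℤ) + 1)
              with h | h | h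
            · exfalso
              have hm := mul_le_mul_of_nonneg_right (Int.add_one_le_iff.mpr h) h4
              linarith
            · exact h
            · exfalso
              have hm := mul_le_mul_of_nonneg_right (Int.add_one_le_iff.mpr h) h4
              linarith
          have hfeq : (flabel q (fun i => k (i + 1)) (tailv v hv) : ℤ)
              = (flabel q (fun i => k (i + 1)) (tailv w hw) : ℤ) := by
            rw [hceq] at e3
            linarith
          have hteq : tailv v hv = tailv w hw := IHinj (by exact_mod_cast hfeq)
          have hlveq : v.1.val = w.1.val := by
            have := congrArg (fun z => z.1.val) hteq
            simp only [tailv_fst] at this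
            omega
          have hpar : Even (level v) ↔ Even (level w) := by unfold level; rw [hlveq]
          have hx1eq : seqOf v 1 = seqOf w 1 := by
            rcases Classical.em (Even (level v)) with he | he
            · have he' : Even (level w) := hpar.mp he
              rw [if_pos he, if_pos he'] at hceq
              omega
            · have he' : ¬ Even (level w) := fun h => he (hpar.mpr h)
              rw [if_neg he, if_neg he'] at hceq
              omega
          exact vertex_ext v w hv hw hx1eq hteq
      · intro v
        by_cases hv : v.1.val = 0
        · rw [flabel_root v hv]; exact Nat.zero_le _
        · have e1 := key v hv
          obtain ⟨hcl, hcu⟩ := hcb v hv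
          have hf0 : (0:ℤ) ≤ (flabel q (fun i => k (i + 1)) (tailv v hv) : ℤ) :=
            Int.natCast_nonneg _
          have hq1 : 1 ≤ q := by have := v.1.isLt; omega
          have hrec : hlvl (q + 1) k 1 = 1 + k 1 * hlvl (q + 1) k 2 :=
            hlvl_rec (q + 1) k 1 (by omega)
          have hrec' : (hlvl (q + 1) k 1 : ℤ) = 1 + (k 1 : ℤ) * (hlvl (q + 1) k 2 : ℤ) := by
            exact_mod_cast hrec
          have hm := mul_le_mul_of_nonneg_right hcu h4
          have hfin : (flabel (q + 1) k v : ℤ) ≤ (hlvl (q + 1) k 1 : ℤ) - 1 := by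
            linarith
          omega
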